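/- Suppose P : ℕ → ℝ is positive and there exist positive constants A, T such that P(n) ≤ A·n^{T·log n}·P(ℓ)·P(n-ℓ) for all 0 < ℓ < n, and suppose λ = lim P(n)^{1/n} exists and is positive. Then there exist positive constants A*, T* such that P(n) ≥ A*·n^{-T*·log n}·λ^n for all n ≥ 1. -/

import Mathlib

open Filter Real Finset


lemma aux_sq_le_pow (i : ℕ) : ((i:ℝ))^2 ≤ 4 * (3/2)^i := by
  induction i with
  | zero => norm_num
  | succ i ih =>
    rcases lt_or_ge i 5 with h | h
    · interval_cases i <;> norm_num
    · have hi : (5:ℝ) ≤ i := by exact_mod_cast h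
      have he : (4:ℝ) * (3/2)^(i+1) = (3/2) * (4 * (3/2)^i) := by ring
      rw [he]
      push_cast
      nlinarith [sq_nonneg ((i:ℝ) - 5)]

lemma aux_geom (k : ℕ) : ∑ j ∈ range k, (3/4:ℝ)^j ≤ 4 := by
  rw [geom_sum_eq (by norm_num : (3/4:ℝ) ≠ 1)]
  rw [div_le_iff_of_neg (by norm_num : (3/4:ℝ) - 1 < 0)]
  nlinarith [pow_nonneg (by norm_num : (0:ℝ) ≤ 3/4) k]

lemma aux_sum (k : ℕ) : ∑ j ∈ range k, ((j:ℝ)+1)^2 / 2^(j+1) ≤ 12 := by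
  calc ∑ j ∈ range k, ((j:ℝ)+1)^2 / 2^(j+1)
      ≤ ∑ j ∈ range k, 3 * (3/4:ℝ)^j := by
        refine Finset.sum_le_sum fun j _ => ?_
        have h1 := aux_sq_le_pow (j+1)
        push_cast at h1
        have h2 : (0:ℝ) < 2^(j+1) := by positivity
        rw [div_le_iff₀ h2]
        have e : (3/4:ℝ)^j * 2^j = (3/2)^j := by
          rw [← mul_pow]; norm_num
        calc ((j:ℝ)+1)^2 ≤ 4 * (3/2)^(j+1) := h1
          _ = 3 * (3/4:ℝ)^j * 2^(j+1) := by
              rw [pow_succ, pow_succ, ← e]; ring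
    _ = 3 * ∑ j ∈ range k, (3/4:ℝ)^j := by rw [Finset.mul_sum]
    _ ≤ 3 * 4 := by nlinarith [aux_geom k]
    _ = 12 := by norm_num


set_option maxHeartbeats 1000000 in
theorem stmt6 (P : ℕ → ℝ) (hpos : ∀ n, 1 ≤ n → 0 < P n)
    (A T : ℝ) (hA : 0 < A) (hT : 0 < T)
    (hub : ∀ n ℓ : ℕ, 0 < ℓ → ℓ < n →
      P n ≤ A * (n : ℝ) ^ (T * Real.log n) * P ℓ * P (n - ℓ))
    (lam : ℝ) (hlam : 0 < lam)
    (hlim : Filter.Tendsto (fun n : ℕ => P n ^ (1 / (n : ℝ))) Filter.atTop (nhds lam)) :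
    ∃ A' T' : ℝ, 0 < A' ∧ 0 < T' ∧ ∀ n : ℕ, 1 ≤ n →
      P n ≥ A' * (n : ℝ) ^ (-(T' * Real.log n)) * lam ^ n := by
  set B := |Real.log A| with hBdef
  have hB : Real.log A ≤ B := le_abs_self _
  have hB0 : 0 ≤ B := abs_nonneg _
  set f : ℕ → ℝ := fun m => Real.log (P m) - m * Real.log lam with hfdef
  -- limit of f m / m
  have hlog : Tendsto (fun m : ℕ => Real.log (P m) / m) atTop (nhds (Real.log lam)) := by
    have h1 : Tendsto (fun m : ℕ => Real.log (P m ^ (1/(m:ℝ)))) atTop (nhds (Real.log lam)) :=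
      (Real.continuousAt_log hlam.ne').tendsto.comp hlim
    refine h1.congr' ?_
    filter_upwards [eventually_ge_atTop 1] with m hm
    rw [Real.log_rpow (hpos m hm), one_div, inv_mul_eq_div]
  have hf0 : Tendsto (fun m : ℕ => f m / m) atTop (nhds 0) := by
    have h2 := hlog.sub_const (Real.log lam)
    rw [sub_self] at h2
    refine h2.congr' ?_
    filter_upwards [eventually_ge_atTop 1] with m hm
    have hm0 : ((m:ℝ)) ≠ 0 := by
      have : (1:ℝ) ≤ (m:ℝ) := by exact_mod_cast hm
      linarith
    simp only [hfdef]
    field_simp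
  -- doubling inequality
  have hkey : ∀ m : ℕ, 1 ≤ m →
      f (2*m) ≤ 2 * f m + (Real.log A + T * (Real.log 2 + Real.log m)^2) := by
    intro m hm
    have h := hub (2*m) m hm (by omega)
    have h2 : 2*m - m = m := by omega
    rw [h2] at h
    have hp : 0 < P m := hpos m hm
    have hp2 : 0 < P (2*m) := hpos _ (by omega)
    have hmr : (0:ℝ) < (m:ℝ) := by exact_mod_cast hm
    have hx : (0:ℝ) < ((2*m : ℕ):ℝ) := by push_cast; linarith
    have hX : (0:ℝ) < ((2*m : ℕ):ℝ) ^ (T * Real.log ((2*m:ℕ):ℝ)) := Real.rpow_pos_of_pos hx _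
    have hle := Real.log_le_log hp2 h
    rw [Real.log_mul (by positivity) hp.ne', Real.log_mul (by positivity) hp.ne',
        Real.log_mul hA.ne' hX.ne', Real.log_rpow hx] at hle
    have hlog2m : Real.log ((2*m:ℕ):ℝ) = Real.log 2 + Real.log (m:ℝ) := by
      push_cast
      rw [Real.log_mul (by norm_num) hmr.ne']
    rw [hlog2m] at hle
    simp only [hfdef]
    push_cast
    nlinarith [hle]
  refine ⟨Real.exp (-(12*B + 24*T*(Real.log 2)^2)), 24*T, Real.exp_pos _, by linarith, ?_⟩
  intro n hn
  have hnr : (1:ℝ) ≤ (n:ℝ) := by exact_mod_cast hn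
  have hnr0 : (0:ℝ) < (n:ℝ) := by linarith
  set L := Real.log (n:ℝ) with hLdef
  have hL0 : 0 ≤ L := Real.log_nonneg hnr
  set M := B + T * (Real.log 2 + L)^2 with hMdef
  have hM0 : 0 ≤ M := by positivity
  have hlog2 : 0 ≤ Real.log 2 := Real.log_nonneg (by norm_num)
  -- log of 2^(j)*n
  have hlogpow : ∀ j : ℕ, Real.log (((2^j * n : ℕ)):ℝ) = j * Real.log 2 + L := by
    intro j
    push_cast
    rw [Real.log_mul (by positivity) hnr0.ne', Real.log_pow]
  -- the iteration claim
  have claim : ∀ k : ℕ, f (2^k * n) / 2^k ≤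
      f n + ∑ j ∈ range k, (Real.log A + T * (Real.log 2 + Real.log ((2^j * n : ℕ):ℝ))^2) / 2^(j+1) := by
    intro k
    induction k with
    | zero => simp
    | succ k ih =>
      have hm1 : 1 ≤ 2^k * n := Nat.one_le_iff_ne_zero.mpr (by positivity)
      have step := hkey (2^k * n) hm1
      have e : 2^(k+1)*n = 2*(2^k*n) := by ring
      rw [Finset.sum_range_succ, e]
      have h2k : (0:ℝ) < (2:ℝ)^k := by positivity
      have h2k1 : (0:ℝ) < (2:ℝ)^(k+1) := by positivity
      have hdiv : (2 * f (2^k*n) + (Real.log A + T * (Real.log 2 + Real.log ((2^k*n:ℕ):ℝ))^2)) / 2^(k+1)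
          ≤ (f (2*(2^k*n))) / 2^(k+1) → True := fun _ => trivial
      have hdiv : f (2*(2^k*n)) / 2^(k+1)
          ≤ (2 * f (2^k*n) + (Real.log A + T * (Real.log 2 + Real.log ((2^k*n:ℕ):ℝ))^2)) / 2^(k+1) := by
        gcongr
      have expand : (2 * f (2^k*n) + (Real.log A + T * (Real.log 2 + Real.log ((2^k*n:ℕ):ℝ))^2)) / 2^(k+1)
          = f (2^k*n)/2^k + (Real.log A + T * (Real.log 2 + Real.log ((2^k*n:ℕ):ℝ))^2)/2^(k+1) := by
        field_simp
        ring
      rw [expand] at hdiv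
      calc f (2*(2^k*n)) / 2^(k+1)
          ≤ f (2^k*n)/2^k + (Real.log A + T * (Real.log 2 + Real.log ((2^k*n:ℕ):ℝ))^2)/2^(k+1) := hdiv
        _ ≤ _ := by linarith [ih]
  -- bound the sum by 12*M
  have sumbound : ∀ k : ℕ,
      ∑ j ∈ range k, (Real.log A + T * (Real.log 2 + Real.log ((2^j * n : ℕ):ℝ))^2) / 2^(j+1) ≤ 12 * M := by
    intro k
    calc ∑ j ∈ range k, (Real.log A + T * (Real.log 2 + Real.log ((2^j * n : ℕ):ℝ))^2) / 2^(j+1)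
        ≤ ∑ j ∈ range k, (((j:ℝ)+1)^2 / 2^(j+1)) * M := by
          refine Finset.sum_le_sum fun j _ => ?_
          rw [hlogpow j]
          have h2j : (0:ℝ) < (2:ℝ)^(j+1) := by positivity
          have hj0 : (0:ℝ) ≤ (j:ℝ) := Nat.cast_nonneg j
          have hj1 : (1:ℝ) ≤ ((j:ℝ)+1) := by linarith
          have hjL : 0 ≤ (j:ℝ) * L := mul_nonneg hj0 hL0
          have hbound : Real.log 2 + ((j:ℝ) * Real.log 2 + L) ≤ ((j:ℝ)+1) * (Real.log 2 + L) := by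
            nlinarith
          have hnn : 0 ≤ Real.log 2 + ((j:ℝ) * Real.log 2 + L) := by positivity
          have hsq : (Real.log 2 + ((j:ℝ) * Real.log 2 + L))^2 ≤ ((j:ℝ)+1)^2 * (Real.log 2 + L)^2 := by
            calc (Real.log 2 + ((j:ℝ) * Real.log 2 + L))^2
                ≤ (((j:ℝ)+1) * (Real.log 2 + L))^2 := pow_le_pow_left₀ hnn hbound 2
              _ = ((j:ℝ)+1)^2 * (Real.log 2 + L)^2 := by ring
          have hjsq : (1:ℝ) ≤ ((j:ℝ)+1)^2 := by nlinarith
          have hBle : Real.log A ≤ ((j:ℝ)+1)^2 * B :=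
            le_trans hB (by nlinarith)
          have hterm : Real.log A + T * (Real.log 2 + ((j:ℝ) * Real.log 2 + L))^2 ≤ ((j:ℝ)+1)^2 * M := by
            simp only [hMdef]
            have h1 := mul_le_mul_of_nonneg_left hsq hT.le
            have : ((j:ℝ)+1)^2 * (B + T * (Real.log 2 + L)^2) = ((j:ℝ)+1)^2 * B + T * (((j:ℝ)+1)^2 * (Real.log 2 + L)^2) := by ring
            linarith
          calc (Real.log A + T * (Real.log 2 + ((j:ℝ) * Real.log 2 + L))^2) / 2^(j+1)
              ≤ (((j:ℝ)+1)^2 * M) / 2^(j+1) := by gcongr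
            _ = (((j:ℝ)+1)^2 / 2^(j+1)) * M := by ring
      _ ≤ ∑ j ∈ range k, (((j:ℝ)+1)^2 / 2^(j+1)) * M := le_refl _
      _ = (∑ j ∈ range k, ((j:ℝ)+1)^2 / 2^(j+1)) * M := by rw [Finset.sum_mul]
      _ ≤ 12 * M := mul_le_mul_of_nonneg_right (aux_sum k) hM0
  -- tendsto along subsequence
  have hmono : Tendsto (fun k : ℕ => 2^k * n) atTop atTop := by
    apply tendsto_atTop_mono (fun k => ?_) tendsto_id
    calc (id k : ℕ) = k := rfl
      _ ≤ 2^k := (Nat.lt_two_pow_self (n := k)).le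
      _ ≤ 2^k * n := Nat.le_mul_of_pos_right _ hn
  have hten : Tendsto (fun k : ℕ => f (2^k*n) / ((2^k*n : ℕ):ℝ)) atTop (nhds 0) :=
    hf0.comp hmono
  have hbnd : ∀ k : ℕ, f (2^k*n) / ((2^k*n : ℕ):ℝ) ≤ (f n + 12*M) / n := by
    intro k
    have h2k : (0:ℝ) < (2:ℝ)^k := by positivity
    have e : ((2^k*n : ℕ):ℝ) = (2:ℝ)^k * n := by push_cast; ring
    rw [e, ← div_div]
    have := le_trans (claim k) (by linarith [sumbound k] : f n + ∑ j ∈ range k, (Real.log A + T * (Real.log 2 + Real.log ((2^j * n : ℕ):ℝ))^2) / 2^(j+1) ≤ f n + 12*M)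
    gcongr
  have hge : 0 ≤ (f n + 12*M) / n := le_of_tendsto' hten hbnd
  have hfn : -(12*M) ≤ f n := by
    rw [le_div_iff₀ hnr0, zero_mul] at hge
    linarith
  -- conclude
  have hexp : Real.exp (-(12*B + 24*T*(Real.log 2)^2)) * (n:ℝ) ^ (-(24*T * Real.log n)) * lam ^ n
      = Real.exp ((-(12*B + 24*T*(Real.log 2)^2)) + (-(24*T*L))*L + n * Real.log lam) := by
    rw [Real.exp_add, Real.exp_add]
    congr 1
    · congr 1
      rw [Real.rpow_def_of_pos hnr0]
      congr 1
      ring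
    · rw [Real.exp_nat_mul, Real.exp_log hlam]
  rw [ge_iff_le, hexp, ← Real.exp_log (hpos n hn), Real.exp_le_exp]
  have hM12 : 12*M ≤ 12*B + 24*T*(Real.log 2)^2 + 24*T*L^2 := by
    simp only [hMdef]
    nlinarith [sq_nonneg (Real.log 2 - L), hT.le]
  simp only [hfdef] at hfn
  nlinarith [hfn, hM12]
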